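/- The complement of the barrier hypersurface has exactly three connected components (part of Lemma 3.5): let M > 0 and let f : [0,∞) → ℝ be a continuous non-decreasing function with f(0) = 0, f(x) > 0 for x > 0, and f(x) ≤ 1/2 for all x. In ℝ⁴ with coordinates (x₁,y₁,x₂,y₂), set ℋ⁺ := {x₂ ≥ 2M, |y₂| = f(x₂ − 2M)}, ℋ⁻ := {x₂ ≤ −2M, |y₂| = f(−x₂ − 2M)}, and U := {y₂ > −1}. Then U ∖ (ℋ⁺ ∪ ℋ⁻) has exactly three connected components, namely V⁺ := {x₂ > 2M, |y₂| < f(x₂ − 2M)}, V⁻ := {x₂ < −2M, |y₂| < f(−x₂ − 2M)}, and V := U ∖ (ℋ⁺ ∪ ℋ⁻ ∪ V⁺ ∪ V⁻); in particular ℋ⁺ separates V from V⁺ and ℋ⁻ separates V from V⁻. -/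
import Mathlib


noncomputable section

/-- The upper part `ℋ⁺ = {x₂ ≥ 2M, |y₂| = f(x₂ − 2M)}` of the barrier
hypersurface, in coordinates `(x₁, y₁, x₂, y₂)` (indices `0, 1, 2, 3`). -/
def Hplus (M : ℝ) (f : ℝ → ℝ) : Set (Fin 4 → ℝ) :=
  {p | 2 * M ≤ p 2 ∧ |p 3| = f (p 2 - 2 * M)}

/-- The lower part `ℋ⁻ = {x₂ ≤ −2M, |y₂| = f(−x₂ − 2M)}`. -/
def Hminus (M : ℝ) (f : ℝ → ℝ) : Set (Fin 4 → ℝ) :=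
  {p | p 2 ≤ -(2 * M) ∧ |p 3| = f (-(p 2) - 2 * M)}

/-- The ambient region `U = {y₂ > −1}`. -/
def Uset : Set (Fin 4 → ℝ) :=
  {p | -1 < p 3}

/-- The component `V⁺ = {x₂ > 2M, |y₂| < f(x₂ − 2M)}`. -/
def Vplus (M : ℝ) (f : ℝ → ℝ) : Set (Fin 4 → ℝ) :=
  {p | 2 * M < p 2 ∧ |p 3| < f (p 2 - 2 * M)}

/-- The component `V⁻ = {x₂ < −2M, |y₂| < f(−x₂ − 2M)}`. -/
def Vminus (M : ℝ) (f : ℝ → ℝ) : Set (Fin 4 → ℝ) :=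
  {p | p 2 < -(2 * M) ∧ |p 3| < f (-(p 2) - 2 * M)}

/-- The middle component `V = U ∖ (ℋ⁺ ∪ ℋ⁻ ∪ V⁺ ∪ V⁻)`. -/
def Vmid (M : ℝ) (f : ℝ → ℝ) : Set (Fin 4 → ℝ) :=
  Uset \ (Hplus M f ∪ Hminus M f ∪ Vplus M f ∪ Vminus M f)

open Set Function

private lemma seg_joinedIn {s : Set (Fin 4 → ℝ)} {a b : Fin 4 → ℝ}
    (h : ∀ t : ℝ, 0 ≤ t → t ≤ 1 → ((1 - t) • a + t • b) ∈ s) : JoinedIn s a b :=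
  ⟨⟨⟨fun t => (1 - (t : ℝ)) • a + (t : ℝ) • b, by fun_prop⟩, by simp, by simp⟩,
    fun t => h t t.2.1 t.2.2⟩

private lemma joined_update {s : Set (Fin 4 → ℝ)} {p : Fin 4 → ℝ} {i : Fin 4} {v : ℝ}
    (h : ∀ y : ℝ, y ∈ Set.uIcc (p i) v → Function.update p i y ∈ s) :
    JoinedIn s p (Function.update p i v) := by
  apply seg_joinedIn
  intro t ht0 ht1
  have key : (1 - t) • p + t • Function.update p i v
      = Function.update p i ((1 - t) * p i + t * v) := by
    funext j
    rcases eq_or_ne j i with rfl | hj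
    · simp
    · simp only [Pi.add_apply, Pi.smul_apply, smul_eq_mul, Function.update_of_ne hj]
      ring
  rw [key]
  apply h
  have := (convex_uIcc (p i) v) Set.left_mem_uIcc Set.right_mem_uIcc
    (by linarith : (0:ℝ) ≤ 1 - t) ht0 (by ring)
  simpa using this

private lemma mem_Vmid_iff {M : ℝ} {f : ℝ → ℝ} (hf0 : f 0 = 0) {p : Fin 4 → ℝ} :
    p ∈ Vmid M f ↔ -1 < p 3 ∧ (2 * M ≤ p 2 → f (p 2 - 2 * M) < |p 3|) ∧
      (p 2 ≤ -(2 * M) → f (-(p 2) - 2 * M) < |p 3|) := by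
  simp only [Vmid, Uset, Hplus, Hminus, Vplus, Vminus, Set.mem_diff, Set.mem_union,
    Set.mem_setOf_eq]
  constructor
  · rintro ⟨h1, h2⟩
    push_neg at h2
    obtain ⟨⟨⟨hH1, hH2⟩, hV1⟩, hV2⟩ := h2
    refine ⟨h1, ?_, ?_⟩
    · intro hle
      have hne := hH1 hle
      rcases lt_or_eq_of_le hle with hlt | heq
      · exact lt_of_le_of_ne (hV1 hlt) (Ne.symm hne)
      · have h0 : p 2 - 2 * M = 0 := by linarith
        rw [h0, hf0] at hne ⊢
        exact lt_of_le_of_ne (abs_nonneg _) (Ne.symm hne)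
    · intro hle
      have hne := hH2 hle
      rcases lt_or_eq_of_le hle with hlt | heq
      · exact lt_of_le_of_ne (hV2 hlt) (Ne.symm hne)
      · have h0 : -(p 2) - 2 * M = 0 := by linarith
        rw [h0, hf0] at hne ⊢
        exact lt_of_le_of_ne (abs_nonneg _) (Ne.symm hne)
  · rintro ⟨h1, h2, h3⟩
    refine ⟨h1, ?_⟩
    rintro (((⟨ha, hb⟩ | ⟨ha, hb⟩) | ⟨ha, hb⟩) | ⟨ha, hb⟩)
    · exact (h2 ha).ne' hb
    · exact (h3 ha).ne' hb
    · exact absurd hb (h2 ha.le).asymm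
    · exact absurd hb (h3 ha.le).asymm

private lemma isOpen_Vplus {M : ℝ} {f : ℝ → ℝ} (hf_cont : ContinuousOn f (Set.Ici 0)) :
    IsOpen (Vplus M f) := by
  have hs : IsOpen {p : Fin 4 → ℝ | 2 * M < p 2} :=
    isOpen_lt continuous_const (continuous_apply 2)
  have hg : ContinuousOn (fun p : Fin 4 → ℝ => f (p 2 - 2 * M) - |p 3|)
      {p | 2 * M < p 2} := by
    apply ContinuousOn.sub
    · apply hf_cont.comp (Continuous.continuousOn (by fun_prop))
      intro p hp
      simp only [Set.mem_setOf_eq] at hp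
      simp only [Set.mem_Ici]
      linarith
    · exact ((continuous_apply 3).abs).continuousOn
  have h := hg.isOpen_inter_preimage hs isOpen_Ioi (t := Set.Ioi 0)
  convert h using 1
  ext p
  simp only [Vplus, Set.mem_setOf_eq, Set.mem_inter_iff, Set.mem_preimage, Set.mem_Ioi]
  constructor
  · rintro ⟨h1, h2⟩; exact ⟨h1, by linarith⟩
  · rintro ⟨h1, h2⟩; exact ⟨h1, by linarith⟩

private lemma isOpen_Vminus {M : ℝ} {f : ℝ → ℝ} (hf_cont : ContinuousOn f (Set.Ici 0)) :
    IsOpen (Vminus M f) := by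
  have hs : IsOpen {p : Fin 4 → ℝ | p 2 < -(2 * M)} :=
    isOpen_lt (continuous_apply 2) continuous_const
  have hg : ContinuousOn (fun p : Fin 4 → ℝ => f (-(p 2) - 2 * M) - |p 3|)
      {p | p 2 < -(2 * M)} := by
    apply ContinuousOn.sub
    · apply hf_cont.comp (Continuous.continuousOn (by fun_prop))
      intro p hp
      simp only [Set.mem_setOf_eq] at hp
      simp only [Set.mem_Ici]
      linarith
    · exact ((continuous_apply 3).abs).continuousOn
  have h := hg.isOpen_inter_preimage hs isOpen_Ioi (t := Set.Ioi 0)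
  convert h using 1
  ext p
  simp only [Vminus, Set.mem_setOf_eq, Set.mem_inter_iff, Set.mem_preimage, Set.mem_Ioi]
  constructor
  · rintro ⟨h1, h2⟩; exact ⟨h1, by linarith⟩
  · rintro ⟨h1, h2⟩; exact ⟨h1, by linarith⟩

private lemma isOpen_Vmid {M : ℝ} {f : ℝ → ℝ} (hf_cont : ContinuousOn f (Set.Ici 0))
    (hf0 : f 0 = 0) : IsOpen (Vmid M f) := by
  have hCp : IsClosed {p : Fin 4 → ℝ | 2 * M ≤ p 2 ∧ |p 3| ≤ f (p 2 - 2 * M)} := by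
    have hs : IsClosed {p : Fin 4 → ℝ | 2 * M ≤ p 2} :=
      isClosed_le continuous_const (continuous_apply 2)
    have hg : ContinuousOn (fun p : Fin 4 → ℝ => |p 3| - f (p 2 - 2 * M))
        {p | 2 * M ≤ p 2} := by
      apply ContinuousOn.sub
      · exact ((continuous_apply 3).abs).continuousOn
      · apply hf_cont.comp (Continuous.continuousOn (by fun_prop))
        intro p hp
        simp only [Set.mem_setOf_eq] at hp
        simp only [Set.mem_Ici]
        linarith
    have h := hg.preimage_isClosed_of_isClosed hs isClosed_Iic (t := Set.Iic 0)
    convert h using 1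
    ext p
    simp only [Set.mem_setOf_eq, Set.mem_inter_iff, Set.mem_preimage, Set.mem_Iic]
    constructor
    · rintro ⟨h1, h2⟩; exact ⟨h1, by linarith⟩
    · rintro ⟨h1, h2⟩; exact ⟨h1, by linarith⟩
  have hCm : IsClosed {p : Fin 4 → ℝ | p 2 ≤ -(2 * M) ∧ |p 3| ≤ f (-(p 2) - 2 * M)} := by
    have hs : IsClosed {p : Fin 4 → ℝ | p 2 ≤ -(2 * M)} :=
      isClosed_le (continuous_apply 2) continuous_const
    have hg : ContinuousOn (fun p : Fin 4 → ℝ => |p 3| - f (-(p 2) - 2 * M))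
        {p | p 2 ≤ -(2 * M)} := by
      apply ContinuousOn.sub
      · exact ((continuous_apply 3).abs).continuousOn
      · apply hf_cont.comp (Continuous.continuousOn (by fun_prop))
        intro p hp
        simp only [Set.mem_setOf_eq] at hp
        simp only [Set.mem_Ici]
        linarith
    have h := hg.preimage_isClosed_of_isClosed hs isClosed_Iic (t := Set.Iic 0)
    convert h using 1
    ext p
    simp only [Set.mem_setOf_eq, Set.mem_inter_iff, Set.mem_preimage, Set.mem_Iic]
    constructor
    · rintro ⟨h1, h2⟩; exact ⟨h1, by linarith⟩
    · rintro ⟨h1, h2⟩; exact ⟨h1, by linarith⟩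
  have hUeq : Vmid M f = Uset \
      ({p : Fin 4 → ℝ | 2 * M ≤ p 2 ∧ |p 3| ≤ f (p 2 - 2 * M)} ∪
       {p : Fin 4 → ℝ | p 2 ≤ -(2 * M) ∧ |p 3| ≤ f (-(p 2) - 2 * M)}) := by
    ext p
    rw [mem_Vmid_iff hf0]
    simp only [Set.mem_diff, Set.mem_union, Set.mem_setOf_eq, Uset]
    constructor
    · rintro ⟨h1, h2, h3⟩
      refine ⟨h1, ?_⟩
      rintro (⟨ha, hb⟩ | ⟨ha, hb⟩)
      · exact absurd hb (not_le.2 (h2 ha))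
      · exact absurd hb (not_le.2 (h3 ha))
    · rintro ⟨h1, h2⟩
      push_neg at h2
      exact ⟨h1, fun ha => h2.1 ha, fun ha => h2.2 ha⟩
  rw [hUeq]
  exact (isOpen_lt continuous_const (continuous_apply 3)).sdiff (hCp.union hCm)

private lemma abs_le_abs_of_uIcc {a y : ℝ} (hy : y ∈ Set.uIcc a 0) : |y| ≤ |a| := by
  rw [Set.mem_uIcc] at hy
  rcases hy with ⟨h1, h2⟩ | ⟨h1, h2⟩ <;>
    exact abs_le.2 ⟨by linarith [neg_abs_le a, abs_nonneg a],
      by linarith [le_abs_self a, abs_nonneg a]⟩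

private lemma joinedIn_Vplus {M : ℝ} {f : ℝ → ℝ}
    (hf_pos : ∀ x > (0:ℝ), 0 < f x) {p : Fin 4 → ℝ} (hp : p ∈ Vplus M f) :
    JoinedIn (Vplus M f) p ![0, 0, 2 * M + 1, 0] := by
  obtain ⟨hp2, hp3⟩ := hp
  have h1 : (2 * M + 1) - 2 * M = 1 := by ring
  have s1 : JoinedIn (Vplus M f) p (Function.update p 3 0) := by
    apply joined_update
    intro y hy
    simp only [Vplus, Set.mem_setOf_eq, Function.update_apply]
    norm_num
    exact ⟨hp2, lt_of_le_of_lt (abs_le_abs_of_uIcc hy) hp3⟩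
  set q1 := Function.update p 3 0 with hq1
  have hq12 : q1 2 = p 2 := by simp [hq1, Function.update_apply]
  have hq13 : q1 3 = 0 := by simp [hq1]
  have s2 : JoinedIn (Vplus M f) q1 (Function.update q1 2 (2 * M + 1)) := by
    apply joined_update
    intro x hx
    rw [hq12, Set.mem_uIcc] at hx
    have hx2 : 2 * M < x := by rcases hx with ⟨h1, h2⟩ | ⟨h1, h2⟩ <;> linarith
    simp only [Vplus, Set.mem_setOf_eq]
    rw [Function.update_self, Function.update_of_ne (show (3:Fin 4) ≠ 2 by decide), hq13]
    rw [abs_zero]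
    exact ⟨hx2, hf_pos _ (by linarith)⟩
  set q2 := Function.update q1 2 (2 * M + 1) with hq2
  have hq22 : q2 2 = 2 * M + 1 := by simp [hq2]
  have hq23 : q2 3 = 0 := by simp [hq2, Function.update_apply, hq13]
  have s3 : JoinedIn (Vplus M f) q2 (Function.update q2 0 0) := by
    apply joined_update
    intro x _
    simp only [Vplus, Set.mem_setOf_eq]
    rw [Function.update_of_ne (show (2:Fin 4) ≠ 0 by decide),
      Function.update_of_ne (show (3:Fin 4) ≠ 0 by decide)]
    rw [hq22, hq23, abs_zero, h1]
    exact ⟨by linarith, hf_pos 1 one_pos⟩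
  set q3 := Function.update q2 0 0 with hq3
  have s4 : JoinedIn (Vplus M f) q3 (Function.update q3 1 0) := by
    apply joined_update
    intro x _
    simp only [Vplus, Set.mem_setOf_eq]
    rw [Function.update_of_ne (show (2:Fin 4) ≠ 1 by decide),
      Function.update_of_ne (show (3:Fin 4) ≠ 1 by decide), hq3,
      Function.update_of_ne (show (2:Fin 4) ≠ 0 by decide),
      Function.update_of_ne (show (3:Fin 4) ≠ 0 by decide)]
    rw [hq22, hq23, abs_zero, h1]
    exact ⟨by linarith, hf_pos 1 one_pos⟩
  have hfinal : Function.update q3 1 0 = ![0, 0, 2 * M + 1, 0] := by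
    funext i
    fin_cases i <;>
      simp [hq3, hq2, hq1, Function.update_apply]
  rw [hfinal] at s4
  exact ((s1.trans s2).trans s3).trans s4

private lemma joinedIn_Vminus {M : ℝ} {f : ℝ → ℝ}
    (hf_pos : ∀ x > (0:ℝ), 0 < f x) {p : Fin 4 → ℝ} (hp : p ∈ Vminus M f) :
    JoinedIn (Vminus M f) p ![0, 0, -(2 * M + 1), 0] := by
  obtain ⟨hp2, hp3⟩ := hp
  have h1 : -(-(2 * M + 1)) - 2 * M = 1 := by ring
  have s1 : JoinedIn (Vminus M f) p (Function.update p 3 0) := by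
    apply joined_update
    intro y hy
    simp only [Vminus, Set.mem_setOf_eq, Function.update_apply]
    norm_num
    exact ⟨hp2, lt_of_le_of_lt (abs_le_abs_of_uIcc hy) hp3⟩
  set q1 := Function.update p 3 0 with hq1
  have hq12 : q1 2 = p 2 := by simp [hq1, Function.update_apply]
  have hq13 : q1 3 = 0 := by simp [hq1]
  have s2 : JoinedIn (Vminus M f) q1 (Function.update q1 2 (-(2 * M + 1))) := by
    apply joined_update
    intro x hx
    rw [hq12, Set.mem_uIcc] at hx
    have hx2 : x < -(2 * M) := by rcases hx with ⟨h1, h2⟩ | ⟨h1, h2⟩ <;> linarith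
    simp only [Vminus, Set.mem_setOf_eq]
    rw [Function.update_self, Function.update_of_ne (show (3:Fin 4) ≠ 2 by decide), hq13]
    rw [abs_zero]
    exact ⟨hx2, hf_pos _ (by linarith)⟩
  set q2 := Function.update q1 2 (-(2 * M + 1)) with hq2
  have hq22 : q2 2 = -(2 * M + 1) := by simp [hq2]
  have hq23 : q2 3 = 0 := by simp [hq2, Function.update_apply, hq13]
  have s3 : JoinedIn (Vminus M f) q2 (Function.update q2 0 0) := by
    apply joined_update
    intro x _
    simp only [Vminus, Set.mem_setOf_eq]
    rw [Function.update_of_ne (show (2:Fin 4) ≠ 0 by decide),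
      Function.update_of_ne (show (3:Fin 4) ≠ 0 by decide)]
    rw [hq22, hq23, abs_zero, h1]
    exact ⟨by linarith, hf_pos 1 one_pos⟩
  set q3 := Function.update q2 0 0 with hq3
  have s4 : JoinedIn (Vminus M f) q3 (Function.update q3 1 0) := by
    apply joined_update
    intro x _
    simp only [Vminus, Set.mem_setOf_eq]
    rw [Function.update_of_ne (show (2:Fin 4) ≠ 1 by decide),
      Function.update_of_ne (show (3:Fin 4) ≠ 1 by decide), hq3,
      Function.update_of_ne (show (2:Fin 4) ≠ 0 by decide),
      Function.update_of_ne (show (3:Fin 4) ≠ 0 by decide)]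
    rw [hq22, hq23, abs_zero, h1]
    exact ⟨by linarith, hf_pos 1 one_pos⟩
  have hfinal : Function.update q3 1 0 = ![0, 0, -(2 * M + 1), 0] := by
    funext i
    fin_cases i <;>
      simp [hq3, hq2, hq1, Function.update_apply]
  rw [hfinal] at s4
  exact ((s1.trans s2).trans s3).trans s4

private lemma mem_Vmid_of_big {M : ℝ} {f : ℝ → ℝ} (hf0 : f 0 = 0)
    (hf_le : ∀ x ≥ (0:ℝ), f x ≤ 1/2) {p : Fin 4 → ℝ}
    (h1 : -1 < p 3) (h2 : 1/2 < |p 3|) : p ∈ Vmid M f := by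
  rw [mem_Vmid_iff hf0]
  exact ⟨h1, fun h => lt_of_le_of_lt (hf_le _ (by linarith)) h2,
    fun h => lt_of_le_of_lt (hf_le _ (by linarith)) h2⟩

private lemma joined_34 {M : ℝ} {f : ℝ → ℝ} (hf0 : f 0 = 0)
    (hf_le : ∀ x ≥ (0:ℝ), f x ≤ 1/2) {p : Fin 4 → ℝ} (hp3 : p 3 = 3/4) :
    JoinedIn (Vmid M f) p ![0, 0, 0, 3/4] := by
  have habs : |(3/4 : ℝ)| = 3/4 := abs_of_nonneg (by norm_num)
  have s1 : JoinedIn (Vmid M f) p (Function.update p 2 0) := by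
    apply joined_update
    intro x _
    apply mem_Vmid_of_big hf0 hf_le <;>
      rw [Function.update_of_ne (show (3:Fin 4) ≠ 2 by decide), hp3] <;> norm_num [abs_neg, abs_of_nonneg]
  set q1 := Function.update p 2 0 with hq1
  have hq13 : q1 3 = 3/4 := by
    rw [hq1, Function.update_of_ne (show (3:Fin 4) ≠ 2 by decide), hp3]
  have s2 : JoinedIn (Vmid M f) q1 (Function.update q1 0 0) := by
    apply joined_update
    intro x _
    apply mem_Vmid_of_big hf0 hf_le <;>
      rw [Function.update_of_ne (show (3:Fin 4) ≠ 0 by decide), hq13] <;> norm_num [abs_neg, abs_of_nonneg]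
  set q2 := Function.update q1 0 0 with hq2
  have hq23 : q2 3 = 3/4 := by
    rw [hq2, Function.update_of_ne (show (3:Fin 4) ≠ 0 by decide), hq13]
  have s3 : JoinedIn (Vmid M f) q2 (Function.update q2 1 0) := by
    apply joined_update
    intro x _
    apply mem_Vmid_of_big hf0 hf_le <;>
      rw [Function.update_of_ne (show (3:Fin 4) ≠ 1 by decide), hq23] <;> norm_num [abs_neg, abs_of_nonneg]
  have hfinal : Function.update q2 1 0 = ![0, 0, 0, 3/4] := by
    funext i
    fin_cases i <;> simp [hq2, hq1, Function.update_apply, hp3]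
  rw [hfinal] at s3
  exact (s1.trans s2).trans s3

private lemma joined_m34 {M : ℝ} {f : ℝ → ℝ} (hM : 0 < M) (hf0 : f 0 = 0)
    (hf_le : ∀ x ≥ (0:ℝ), f x ≤ 1/2) {p : Fin 4 → ℝ} (hp3 : p 3 = -(3/4)) :
    JoinedIn (Vmid M f) p ![0, 0, 0, 3/4] := by
  have s1 : JoinedIn (Vmid M f) p (Function.update p 2 0) := by
    apply joined_update
    intro x _
    apply mem_Vmid_of_big hf0 hf_le <;>
      rw [Function.update_of_ne (show (3:Fin 4) ≠ 2 by decide), hp3] <;> norm_num [abs_neg, abs_of_nonneg]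
  set q1 := Function.update p 2 0 with hq1
  have hq12 : q1 2 = 0 := by rw [hq1, Function.update_self]
  have hq13 : q1 3 = -(3/4) := by
    rw [hq1, Function.update_of_ne (show (3:Fin 4) ≠ 2 by decide), hp3]
  have s2 : JoinedIn (Vmid M f) q1 (Function.update q1 3 (3/4)) := by
    apply joined_update
    intro y hy
    rw [hq13, Set.mem_uIcc] at hy
    have hy1 : -1 < y := by rcases hy with ⟨h1, h2⟩ | ⟨h1, h2⟩ <;> linarith
    rw [mem_Vmid_iff hf0]
    rw [Function.update_self, Function.update_of_ne (show (2:Fin 4) ≠ 3 by decide), hq12]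
    exact ⟨hy1, fun h => by linarith, fun h => by linarith⟩
  have h34 : Function.update q1 3 (3/4) 3 = 3/4 := Function.update_self _ _ _
  exact s1.trans (s2.trans (joined_34 hf0 hf_le h34))

private lemma joinedIn_Vmid {M : ℝ} {f : ℝ → ℝ} (hM : 0 < M) (hf0 : f 0 = 0)
    (hf_mono : MonotoneOn f (Set.Ici 0))
    (hf_le : ∀ x ≥ (0:ℝ), f x ≤ 1/2) {p : Fin 4 → ℝ} (hp : p ∈ Vmid M f) :
    JoinedIn (Vmid M f) p ![0, 0, 0, 3/4] := by
  have hf_nonneg : ∀ x ≥ (0:ℝ), 0 ≤ f x := fun x hx => by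
    have := hf_mono Set.self_mem_Ici hx hx
    rwa [hf0] at this
  rw [mem_Vmid_iff hf0] at hp
  obtain ⟨h1, h2, h3⟩ := hp
  -- helper for the "go straight up to 3/4" step
  have up : ∀ (hcond : (2 * M ≤ p 2 → f (p 2 - 2 * M) < p 3) ∧
      (p 2 ≤ -(2 * M) → f (-(p 2) - 2 * M) < p 3)),
      JoinedIn (Vmid M f) p (Function.update p 3 (3/4)) := by
    intro hcond
    apply joined_update
    intro y hy
    rw [Set.mem_uIcc] at hy
    rw [mem_Vmid_iff hf0]
    rw [Function.update_self, Function.update_of_ne (show (2:Fin 4) ≠ 3 by decide)]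
    refine ⟨by rcases hy with ⟨ha, hb⟩ | ⟨ha, hb⟩ <;> linarith, ?_, ?_⟩
    · intro hc
      have hfle := hf_le (p 2 - 2 * M) (by linarith)
      have hfp := hcond.1 hc
      have : f (p 2 - 2 * M) < y := by rcases hy with ⟨ha, hb⟩ | ⟨ha, hb⟩ <;> linarith
      calc f (p 2 - 2 * M) < y := this
        _ ≤ |y| := le_abs_self y
    · intro hc
      have hfle := hf_le (-(p 2) - 2 * M) (by linarith)
      have hfp := hcond.2 hc
      have : f (-(p 2) - 2 * M) < y := by rcases hy with ⟨ha, hb⟩ | ⟨ha, hb⟩ <;> linarith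
      calc f (-(p 2) - 2 * M) < y := this
        _ ≤ |y| := le_abs_self y
  -- helper for the "go straight down to -3/4" step
  have down : ∀ (hcond : (2 * M ≤ p 2 → p 3 < -f (p 2 - 2 * M)) ∧
      (p 2 ≤ -(2 * M) → p 3 < -f (-(p 2) - 2 * M)) ∧
      ((-(2*M) < p 2 ∧ p 2 < 2 * M) → True)),
      JoinedIn (Vmid M f) p (Function.update p 3 (-(3/4))) := by
    intro hcond
    apply joined_update
    intro y hy
    rw [Set.mem_uIcc] at hy
    rw [mem_Vmid_iff hf0]
    rw [Function.update_self, Function.update_of_ne (show (2:Fin 4) ≠ 3 by decide)]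
    refine ⟨by rcases hy with ⟨ha, hb⟩ | ⟨ha, hb⟩ <;> linarith, ?_, ?_⟩
    · intro hc
      have hfle := hf_le (p 2 - 2 * M) (by linarith)
      have hfp := hcond.1 hc
      have : y < -f (p 2 - 2 * M) := by rcases hy with ⟨ha, hb⟩ | ⟨ha, hb⟩ <;> linarith
      calc f (p 2 - 2 * M) < -y := by linarith
        _ ≤ |y| := neg_le_abs y
    · intro hc
      have hfle := hf_le (-(p 2) - 2 * M) (by linarith)
      have hfp := hcond.2.1 hc
      have : y < -f (-(p 2) - 2 * M) := by rcases hy with ⟨ha, hb⟩ | ⟨ha, hb⟩ <;> linarith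
      calc f (-(p 2) - 2 * M) < -y := by linarith
        _ ≤ |y| := neg_le_abs y
  rcases le_or_gt (2 * M) (p 2) with hge | hlt
  · have hlevel := h2 hge
    have hnn := hf_nonneg (p 2 - 2 * M) (by linarith)
    have hMm : ¬ (p 2 ≤ -(2 * M)) := by intro h; linarith
    rcases lt_abs.mp hlevel with hup | hdown
    · have s := up ⟨fun _ => hup, fun h => absurd h hMm⟩
      exact s.trans (joined_34 hf0 hf_le (Function.update_self _ _ _))
    · have s := down ⟨fun _ => by linarith, fun h => absurd h hMm, fun _ => trivial⟩
      exact s.trans (joined_m34 hM hf0 hf_le (Function.update_self _ _ _))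
  · rcases le_or_gt (p 2) (-(2 * M)) with hle | hmid
    · have hlevel := h3 hle
      have hnn := hf_nonneg (-(p 2) - 2 * M) (by linarith)
      have hMp : ¬ (2 * M ≤ p 2) := by intro h; linarith
      rcases lt_abs.mp hlevel with hup | hdown
      · have s := up ⟨fun h => absurd h hMp, fun _ => hup⟩
        exact s.trans (joined_34 hf0 hf_le (Function.update_self _ _ _))
      · have s := down ⟨fun h => absurd h hMp, fun _ => by linarith, fun _ => trivial⟩
        exact s.trans (joined_m34 hM hf0 hf_le (Function.update_self _ _ _))
    · have hMp : ¬ (2 * M ≤ p 2) := by intro h; linarith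
      have hMm : ¬ (p 2 ≤ -(2 * M)) := by intro h; linarith
      have s := up ⟨fun h => absurd h hMp, fun h => absurd h hMm⟩
      exact s.trans (joined_34 hf0 hf_le (Function.update_self _ _ _))

private lemma connectedComponentIn_eq_of_partition {X : Type*} [TopologicalSpace X]
    {S A B C : Set X} (hS : S = A ∪ B ∪ C) (hA : IsOpen A) (hB : IsOpen B) (hC : IsOpen C)
    (hApre : IsPreconnected A) (hAB : Disjoint A B) (hAC : Disjoint A C)
    {p : X} (hp : p ∈ A) : connectedComponentIn S p = A := by
  have hAS : A ⊆ S := by rw [hS]; exact fun x hx => Or.inl (Or.inl hx)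
  apply Set.Subset.antisymm
  · have hK := isPreconnected_connectedComponentIn (x := p) (F := S)
    set K := connectedComponentIn S p with hKdef
    have hKS : K ⊆ S := connectedComponentIn_subset S p
    by_contra hcon
    have hne : (K ∩ (B ∪ C)).Nonempty := by
      rcases Set.not_subset.1 hcon with ⟨x, hxK, hxA⟩
      have hx := hKS hxK
      rw [hS] at hx
      rcases hx with (h | h) | h
      · exact absurd h hxA
      · exact ⟨x, hxK, Or.inl h⟩
      · exact ⟨x, hxK, Or.inr h⟩
    have hpK : p ∈ K := mem_connectedComponentIn (hAS hp)
    have hsub : K ⊆ A ∪ (B ∪ C) := by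
      intro x hx
      have := hKS hx
      rw [hS] at this
      rcases this with (h | h) | h
      exacts [Or.inl h, Or.inr (Or.inl h), Or.inr (Or.inr h)]
    obtain ⟨x, hxK, hxA, hxBC⟩ := hK A (B ∪ C) hA (hB.union hC) hsub ⟨p, hpK, hp⟩ hne
    rcases hxBC with h | h
    · exact (hAB.ne_of_mem hxA h) rfl
    · exact (hAC.ne_of_mem hxA h) rfl
  · exact hApre.subset_connectedComponentIn hp hAS

/-- Part of Lemma 3.5: the complement `U ∖ (ℋ⁺ ∪ ℋ⁻)` of the barrier
hypersurface has exactly three connected components, namely `V⁺`, `V⁻` and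
`V`. -/
theorem barrier_three_components (M : ℝ) (hM : 0 < M) (f : ℝ → ℝ)
    (hf_cont : ContinuousOn f (Set.Ici 0))
    (hf_mono : MonotoneOn f (Set.Ici 0))
    (hf0 : f 0 = 0)
    (hf_pos : ∀ x > (0 : ℝ), 0 < f x)
    (hf_le : ∀ x ≥ (0 : ℝ), f x ≤ 1 / 2) :
    Uset \ (Hplus M f ∪ Hminus M f) = Vplus M f ∪ Vminus M f ∪ Vmid M f ∧
    (Vplus M f).Nonempty ∧ (Vminus M f).Nonempty ∧ (Vmid M f).Nonempty ∧
    Disjoint (Vplus M f) (Vminus M f) ∧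
    Disjoint (Vplus M f) (Vmid M f) ∧
    Disjoint (Vminus M f) (Vmid M f) ∧
    (∀ p ∈ Vplus M f,
      connectedComponentIn (Uset \ (Hplus M f ∪ Hminus M f)) p = Vplus M f) ∧
    (∀ p ∈ Vminus M f,
      connectedComponentIn (Uset \ (Hplus M f ∪ Hminus M f)) p = Vminus M f) ∧
    (∀ p ∈ Vmid M f,
      connectedComponentIn (Uset \ (Hplus M f ∪ Hminus M f)) p = Vmid M f) := by
  have hf_nonneg : ∀ x ≥ (0:ℝ), 0 ≤ f x := fun x hx => by
    have := hf_mono Set.self_mem_Ici hx hx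
    rwa [hf0] at this
  set S := Uset \ (Hplus M f ∪ Hminus M f) with hSdef
  -- Vplus ⊆ S
  have hVpS : Vplus M f ⊆ S := by
    rintro p ⟨h1, h2⟩
    have hle := hf_le (p 2 - 2 * M) (by linarith)
    have habs := neg_abs_le (p 3)
    refine ⟨by simp only [Uset, Set.mem_setOf_eq]; linarith, ?_⟩
    rintro (⟨ha, hb⟩ | ⟨ha, hb⟩)
    · exact h2.ne hb
    · linarith
  have hVmS : Vminus M f ⊆ S := by
    rintro p ⟨h1, h2⟩
    have hle := hf_le (-(p 2) - 2 * M) (by linarith)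
    have habs := neg_abs_le (p 3)
    refine ⟨by simp only [Uset, Set.mem_setOf_eq]; linarith, ?_⟩
    rintro (⟨ha, hb⟩ | ⟨ha, hb⟩)
    · linarith
    · exact h2.ne hb
  have hVmidS : Vmid M f ⊆ S := by
    rintro p ⟨h1, h2⟩
    refine ⟨h1, fun h => h2 ?_⟩
    rcases h with h | h
    · exact Or.inl (Or.inl (Or.inl h))
    · exact Or.inl (Or.inl (Or.inr h))
  -- partition
  have hS_eq : S = Vplus M f ∪ Vminus M f ∪ Vmid M f := by
    ext p
    constructor
    · intro hp
      by_cases hvp : p ∈ Vplus M f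
      · exact Or.inl (Or.inl hvp)
      by_cases hvm : p ∈ Vminus M f
      · exact Or.inl (Or.inr hvm)
      refine Or.inr ⟨hp.1, ?_⟩
      rintro (((h | h) | h) | h)
      · exact hp.2 (Or.inl h)
      · exact hp.2 (Or.inr h)
      · exact hvp h
      · exact hvm h
    · rintro ((h | h) | h)
      exacts [hVpS h, hVmS h, hVmidS h]
  -- nonemptiness
  have hbp : (![0, 0, 2 * M + 1, 0] : Fin 4 → ℝ) ∈ Vplus M f := by
    have h1 : (2 * M + 1) - 2 * M = 1 := by ring
    constructor
    · show 2 * M < 2 * M + 1; linarith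
    · show |(0:ℝ)| < f ((2 * M + 1) - 2 * M)
      rw [abs_zero, h1]
      exact hf_pos 1 one_pos
  have hbm : (![0, 0, -(2 * M + 1), 0] : Fin 4 → ℝ) ∈ Vminus M f := by
    have h1 : -(-(2 * M + 1)) - 2 * M = 1 := by ring
    constructor
    · show -(2 * M + 1) < -(2 * M); linarith
    · show |(0:ℝ)| < f (-(-(2 * M + 1)) - 2 * M)
      rw [abs_zero, h1]
      exact hf_pos 1 one_pos
  have hbmid : (![0, 0, 0, 3/4] : Fin 4 → ℝ) ∈ Vmid M f := by
    apply mem_Vmid_of_big hf0 hf_le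
    · show (-1 : ℝ) < 3/4; norm_num
    · show (1/2 : ℝ) < |(3/4 : ℝ)|
      rw [abs_of_nonneg (by norm_num : (0:ℝ) ≤ 3/4)]
      norm_num
  -- disjointness
  have hd1 : Disjoint (Vplus M f) (Vminus M f) := by
    rw [Set.disjoint_left]
    rintro p ⟨h1, _⟩ ⟨h2, _⟩
    linarith
  have hd2 : Disjoint (Vplus M f) (Vmid M f) := by
    rw [Set.disjoint_left]
    intro p hp hq
    exact hq.2 (Or.inl (Or.inr hp))
  have hd3 : Disjoint (Vminus M f) (Vmid M f) := by
    rw [Set.disjoint_left]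
    intro p hp hq
    exact hq.2 (Or.inr hp)
  -- openness
  have hOp := isOpen_Vplus (M := M) hf_cont
  have hOm := isOpen_Vminus (M := M) hf_cont
  have hOmid := isOpen_Vmid (M := M) hf_cont hf0
  -- preconnectedness
  have hPp : IsPreconnected (Vplus M f) := by
    have : IsPathConnected (Vplus M f) :=
      ⟨_, hbp, fun {y} hy => (joinedIn_Vplus hf_pos hy).symm⟩
    exact this.isConnected.isPreconnected
  have hPm : IsPreconnected (Vminus M f) := by
    have : IsPathConnected (Vminus M f) :=
      ⟨_, hbm, fun {y} hy => (joinedIn_Vminus hf_pos hy).symm⟩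
    exact this.isConnected.isPreconnected
  have hPmid : IsPreconnected (Vmid M f) := by
    have : IsPathConnected (Vmid M f) :=
      ⟨_, hbmid, fun {y} hy => (joinedIn_Vmid hM hf0 hf_mono hf_le hy).symm⟩
    exact this.isConnected.isPreconnected
  refine ⟨hS_eq, ⟨_, hbp⟩, ⟨_, hbm⟩, ⟨_, hbmid⟩, hd1, hd2, hd3, ?_, ?_, ?_⟩
  · intro p hp
    exact connectedComponentIn_eq_of_partition hS_eq hOp hOm hOmid hPp hd1 hd2 hp
  · intro p hp
    have hS_eq' : S = Vminus M f ∪ Vplus M f ∪ Vmid M f := by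
      rw [hS_eq]; ext x; simp only [Set.mem_union]; tauto
    exact connectedComponentIn_eq_of_partition hS_eq' hOm hOp hOmid hPm hd1.symm hd3 hp
  · intro p hp
    have hS_eq' : S = Vmid M f ∪ Vplus M f ∪ Vminus M f := by
      rw [hS_eq]; ext x; simp only [Set.mem_union]; tauto
    exact connectedComponentIn_eq_of_partition hS_eq' hOmid hOp hOm hPmid hd2.symm hd3.symm hp
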